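/- For all x ∈ ℝ^n and y ∈ ℝ^m, (⊞_{i∈[n]} x_i)·(⊞_{j∈[m]} y_j) = ⊞_{(i,j)∈[n]×[m]} x_i y_j, where ⊞ denotes the n-ary limit operation F. -/
import Mathlib


open scoped Classical

/-- ξ_I[x](α): signed count of occurrences of α among the x i, i ∈ I. -/
noncomputable def xiF {ι : Type*} (I : Finset ι) (x : ι → ℝ) (α : ℝ) : ℤ :=
  ((I.filter fun i => x i = α).card : ℤ) - ((I.filter fun i => x i = -α).card : ℤ)

/-- the n-ary limit operation F_I, i.e. ⊞_{i∈I} x_i. -/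
noncomputable def FF {ι : Type*} (I : Finset ι) (x : ι → ℝ) : ℝ :=
  if h : (I.filter fun j => xiF I x (x j) ≠ 0).Nonempty then
    if 0 < xiF I x ((I.filter fun j => xiF I x (x j) ≠ 0).sup' h fun i => |x i|) then
      (I.filter fun j => xiF I x (x j) ≠ 0).sup' h x
    else if xiF I x ((I.filter fun j => xiF I x (x j) ≠ 0).sup' h fun i => |x i|) < 0 then
      (I.filter fun j => xiF I x (x j) ≠ 0).inf' h x
    else 0
  else 0

lemma xiF_neg {ι : Type*} (I : Finset ι) (x : ι → ℝ) (α : ℝ) :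
    xiF I x (-α) = - xiF I x α := by
  simp only [xiF, neg_neg]; ring

lemma xiF_zero {ι : Type*} (I : Finset ι) (x : ι → ℝ) : xiF I x 0 = 0 := by
  simp [xiF]

lemma exists_of_xiF_ne {ι : Type*} (I : Finset ι) (x : ι → ℝ) (α : ℝ)
    (h : xiF I x α ≠ 0) : ∃ i ∈ I, x i = α ∨ x i = -α := by
  by_contra hc
  push_neg at hc
  have h1 : I.filter (fun i => x i = α) = ∅ :=
    Finset.filter_eq_empty_iff.2 fun {i} hi => fun he => (hc i hi).1 he
  have h2 : I.filter (fun i => x i = -α) = ∅ :=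
    Finset.filter_eq_empty_iff.2 fun {i} hi => fun he => (hc i hi).2 he
  simp [xiF, h1, h2] at h

lemma card_filter_int {σ : Type*} (s : Finset σ) (p : σ → Prop) [DecidablePred p] :
    ((s.filter p).card : ℤ) = ∑ a ∈ s, if p a then (1:ℤ) else 0 := by
  rw [Finset.card_filter]
  push_cast
  rfl

lemma sum_odd_eq_zero {ι : Type*} (s : Finset ι) (x : ι → ℝ) (g : ℝ → ℤ)
    (hg : ∀ β, g (-β) = - g β)
    (hsym : ∀ i ∈ s, (s.filter fun k => x k = x i).card = (s.filter fun k => x k = -(x i)).card) :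
    ∑ i ∈ s, g (x i) = 0 := by
  classical
  have hcomp : ∑ i ∈ s, g (x i)
      = ∑ β ∈ s.image x, ((s.filter fun a => x a = β).card • g β) :=
    Finset.sum_comp g x
  -- the image is closed under negation, with equal fiber cards
  have hmemneg : ∀ β ∈ s.image x, -β ∈ s.image x := by
    intro β hβ
    obtain ⟨i, hi, rfl⟩ := Finset.mem_image.1 hβ
    have hpos : 0 < (s.filter fun k => x k = -(x i)).card := by
      rw [← hsym i hi]
      exact Finset.card_pos.2 ⟨i, Finset.mem_filter.2 ⟨hi, rfl⟩⟩
    obtain ⟨k, hk⟩ := Finset.card_pos.1 hpos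
    obtain ⟨hk1, hk2⟩ := Finset.mem_filter.1 hk
    exact Finset.mem_image.2 ⟨k, hk1, hk2⟩
  have hcard : ∀ β ∈ s.image x,
      (s.filter fun a => x a = β).card = (s.filter fun a => x a = -β).card := by
    intro β hβ
    obtain ⟨i, hi, rfl⟩ := Finset.mem_image.1 hβ
    exact hsym i hi
  have hflip : ∑ β ∈ s.image x, ((s.filter fun a => x a = β).card • g β)
      = ∑ β ∈ s.image x, ((s.filter fun a => x a = -β).card • g (-β)) := by
    apply Finset.sum_nbij' (fun β => -β) (fun β => -β)
    · exact hmemneg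
    · exact hmemneg
    · intro a _; simp
    · intro a _; simp
    · intro a _; simp
  have : ∑ β ∈ s.image x, ((s.filter fun a => x a = β).card • g β)
      = - ∑ β ∈ s.image x, ((s.filter fun a => x a = β).card • g β) := by
    nth_rewrite 1 [hflip]
    rw [← Finset.sum_neg_distrib]
    apply Finset.sum_congr rfl
    intro β hβ
    rw [← hcard β hβ, hg]
    simp
  rw [hcomp]
  omega

lemma xiF_prod {ι κ : Type*} (I : Finset ι) (K : Finset κ) (x : ι → ℝ) (y : κ → ℝ)
    (γ : ℝ) (hγ : γ ≠ 0) :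
    xiF (I ×ˢ K) (fun q => x q.1 * y q.2) γ = ∑ i ∈ I, xiF K y (γ / x i) := by
  unfold xiF
  rw [card_filter_int, card_filter_int, ← Finset.sum_sub_distrib, Finset.sum_product]
  apply Finset.sum_congr rfl
  intro i _
  rw [card_filter_int, card_filter_int, ← Finset.sum_sub_distrib]
  apply Finset.sum_congr rfl
  intro j _
  by_cases hx : x i = 0
  · have : γ / x i = 0 := by simp [hx]
    simp only [hx, this, zero_mul, neg_zero]
    have hγ' : ¬ ((0:ℝ) = γ) := fun h => hγ h.symm
    have hγ'' : ¬ ((0:ℝ) = -γ) := fun h => hγ (by linarith)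
    simp [hγ', hγ'']
  · have h1 : (x i * y j = γ) ↔ (y j = γ / x i) := by
      rw [eq_div_iff hx, mul_comm]
    have h2 : (x i * y j = -γ) ↔ (y j = -(γ / x i)) := by
      rw [← neg_div, eq_div_iff hx, mul_comm]
    simp only [h1, h2]

lemma xiF_prod_top {ι κ : Type*} (I : Finset ι) (K : Finset κ) (x : ι → ℝ) (y : κ → ℝ)
    (Mx My : ℝ) (hMx : 0 < Mx) (hMy : 0 < My)
    (Hx : ∀ α, Mx < |α| → xiF I x α = 0)
    (Hy : ∀ α, My < |α| → xiF K y α = 0)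
    (γ : ℝ) (hγ : Mx * My ≤ |γ|) :
    xiF (I ×ˢ K) (fun q => x q.1 * y q.2) γ = xiF I x Mx * xiF K y (γ / Mx) := by
  have hγabs : 0 < |γ| := lt_of_lt_of_le (mul_pos hMx hMy) hγ
  have hγ0 : γ ≠ 0 := by
    intro h; rw [h, abs_zero] at hγabs; exact lt_irrefl _ hγabs
  rw [xiF_prod I K x y γ hγ0]
  rw [← Finset.sum_filter_add_sum_filter_not I (fun i => Mx < |x i|)]
  have hbig : ∑ i ∈ I.filter (fun i => Mx < |x i|), xiF K y (γ / x i) = 0 := by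
    apply sum_odd_eq_zero _ x (fun β => xiF K y (γ / β))
    · intro β; rw [div_neg, xiF_neg]
    · intro i hi
      obtain ⟨hiI, hix⟩ := Finset.mem_filter.1 hi
      have hfil : ∀ β : ℝ, Mx < |β| →
          (I.filter fun i => Mx < |x i|).filter (fun k => x k = β)
            = I.filter (fun k => x k = β) := by
        intro β hβ
        rw [Finset.filter_filter]
        apply Finset.filter_congr
        intro k _
        constructor
        · rintro ⟨_, h⟩; exact h
        · intro h; exact ⟨by rw [h]; exact hβ, h⟩
      have h0 := Hx (x i) hix
      have hneg : Mx < |-(x i)| := by rwa [abs_neg]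
      rw [hfil _ hix, hfil _ hneg]
      unfold xiF at h0
      omega
  have hsmall : ∑ i ∈ I.filter (fun i => ¬ Mx < |x i|), xiF K y (γ / x i)
      = xiF I x Mx * xiF K y (γ / Mx) := by
    have hMne : Mx ≠ -Mx := by intro h; linarith
    have hterm : ∀ i ∈ I.filter (fun i => ¬ Mx < |x i|),
        xiF K y (γ / x i)
          = ((if x i = Mx then (1:ℤ) else 0) - (if x i = -Mx then 1 else 0))
              * xiF K y (γ / Mx) := by
      intro i hi
      obtain ⟨hiI, hile⟩ := Finset.mem_filter.1 hi
      push_neg at hile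
      by_cases h1 : x i = Mx
      · have h2 : ¬ x i = -Mx := by rw [h1]; exact hMne
        rw [h1, if_pos rfl, if_neg (by rw [h1] at h2; exact h2)]
        ring
      · by_cases h2 : x i = -Mx
        · rw [h2, if_neg (h2 ▸ h1), if_pos rfl]
          rw [div_neg, xiF_neg]
          ring
        · rw [if_neg h1, if_neg h2]
          by_cases h0 : x i = 0
          · rw [h0, div_zero, xiF_zero]; ring
          · have habs : |x i| < Mx := by
              rcases lt_or_eq_of_le hile with h | h
              · exact h
              · exact absurd ((abs_eq hMx.le).1 h) (by tauto)
            have habs0 : 0 < |x i| := abs_pos.2 h0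
            have : My < |γ / x i| := by
              rw [abs_div, lt_div_iff₀ habs0]
              nlinarith
            rw [Hy _ this]
            ring
    rw [Finset.sum_congr rfl hterm, ← Finset.sum_mul]
    congr 1
    have hext : ∑ i ∈ I.filter (fun i => ¬ Mx < |x i|),
        ((if x i = Mx then (1:ℤ) else 0) - (if x i = -Mx then 1 else 0))
        = ∑ i ∈ I, ((if x i = Mx then (1:ℤ) else 0) - (if x i = -Mx then 1 else 0)) := by
      apply Finset.sum_subset (Finset.filter_subset _ _)
      intro i hiI hni
      have hbig' : Mx < |x i| := by
        by_contra hc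
        exact hni (Finset.mem_filter.2 ⟨hiI, hc⟩)
      have h1 : ¬ x i = Mx := by
        intro h; rw [h, abs_of_pos hMx] at hbig'; exact lt_irrefl _ hbig'
      have h2 : ¬ x i = -Mx := by
        intro h; rw [h, abs_neg, abs_of_pos hMx] at hbig'; exact lt_irrefl _ hbig'
      rw [if_neg h1, if_neg h2]; ring
    rw [hext]
    unfold xiF
    rw [card_filter_int, card_filter_int, ← Finset.sum_sub_distrib]
  rw [hbig, hsmall, zero_add]

section
variable {ι : Type*} (I : Finset ι) (x : ι → ℝ)

lemma FF_of_not (h : ¬ (I.filter fun j => xiF I x (x j) ≠ 0).Nonempty) : FF I x = 0 := by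
  rw [FF, dif_neg h]

lemma xiF_sup_ne (h : (I.filter fun j => xiF I x (x j) ≠ 0).Nonempty) :
    xiF I x ((I.filter fun j => xiF I x (x j) ≠ 0).sup' h fun i => |x i|) ≠ 0 := by
  obtain ⟨a, ha, hax⟩ := Finset.exists_mem_eq_sup' h (fun i => |x i|)
  have hξ := (Finset.mem_filter.1 ha).2
  rcases abs_choice (x a) with h1 | h1
  · rw [hax, h1]; exact hξ
  · rw [hax, h1, xiF_neg]; simpa using hξ

lemma sup_abs_pos (h : (I.filter fun j => xiF I x (x j) ≠ 0).Nonempty) :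
    0 < (I.filter fun j => xiF I x (x j) ≠ 0).sup' h fun i => |x i| := by
  obtain ⟨a, ha, hax⟩ := Finset.exists_mem_eq_sup' h (fun i => |x i|)
  have hξ := (Finset.mem_filter.1 ha).2
  rw [hax]
  apply abs_pos.2
  intro h0
  rw [h0, xiF_zero] at hξ
  exact hξ rfl

lemma xiF_bound (h : (I.filter fun j => xiF I x (x j) ≠ 0).Nonempty) :
    ∀ α, ((I.filter fun j => xiF I x (x j) ≠ 0).sup' h fun i => |x i|) < |α| →
      xiF I x α = 0 := by
  intro α hα
  by_contra hne
  obtain ⟨i, hiI, hio⟩ := exists_of_xiF_ne I x α hne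
  have hiJ : i ∈ I.filter fun j => xiF I x (x j) ≠ 0 := by
    refine Finset.mem_filter.2 ⟨hiI, ?_⟩
    rcases hio with h' | h'
    · rw [h']; exact hne
    · rw [h', xiF_neg]; simpa using hne
  have h1 : |x i| ≤ (I.filter fun j => xiF I x (x j) ≠ 0).sup' h fun i => |x i| :=
    Finset.le_sup' (fun i => |x i|) hiJ
  have h2 : |x i| = |α| := by
    rcases hio with h' | h' <;> rw [h'] <;> simp
  linarith

lemma FF_of_pos (h : (I.filter fun j => xiF I x (x j) ≠ 0).Nonempty)
    (hpos : 0 < xiF I x ((I.filter fun j => xiF I x (x j) ≠ 0).sup' h fun i => |x i|)) :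
    FF I x = (I.filter fun j => xiF I x (x j) ≠ 0).sup' h fun i => |x i| := by
  rw [FF, dif_pos h, if_pos hpos]
  set M := (I.filter fun j => xiF I x (x j) ≠ 0).sup' h fun i => |x i| with hM
  apply le_antisymm
  · apply Finset.sup'_le
    intro i hi
    exact le_trans (le_abs_self _) (Finset.le_sup' (fun i => |x i|) hi)
  · have hcard : 0 < (I.filter fun i => x i = M).card := by
      unfold xiF at hpos
      omega
    obtain ⟨i, hi⟩ := Finset.card_pos.1 hcard
    obtain ⟨hiI, hxi⟩ := Finset.mem_filter.1 hi
    have hiJ : i ∈ I.filter fun j => xiF I x (x j) ≠ 0 :=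
      Finset.mem_filter.2 ⟨hiI, by rw [hxi]; exact ne_of_gt hpos⟩
    rw [← hxi]
    exact Finset.le_sup' x hiJ

lemma FF_of_neg (h : (I.filter fun j => xiF I x (x j) ≠ 0).Nonempty)
    (hneg : xiF I x ((I.filter fun j => xiF I x (x j) ≠ 0).sup' h fun i => |x i|) < 0) :
    FF I x = -((I.filter fun j => xiF I x (x j) ≠ 0).sup' h fun i => |x i|) := by
  rw [FF, dif_pos h, if_neg (by exact fun hc => absurd hneg (not_lt.2 hc.le)), if_pos hneg]
  set M := (I.filter fun j => xiF I x (x j) ≠ 0).sup' h fun i => |x i| with hM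
  apply le_antisymm
  · have hcard : 0 < (I.filter fun i => x i = -M).card := by
      have hneg' : xiF I x (-M) > 0 := by rw [xiF_neg]; omega
      unfold xiF at hneg'
      omega
    obtain ⟨i, hi⟩ := Finset.card_pos.1 hcard
    obtain ⟨hiI, hxi⟩ := Finset.mem_filter.1 hi
    have hiJ : i ∈ I.filter fun j => xiF I x (x j) ≠ 0 := by
      refine Finset.mem_filter.2 ⟨hiI, ?_⟩
      rw [hxi, xiF_neg]
      simpa using ne_of_lt hneg
    rw [← hxi]
    exact Finset.inf'_le x hiJ
  · apply Finset.le_inf'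
    intro i hi
    have := Finset.le_sup' (fun i => |x i|) hi
    have := neg_abs_le (x i)
    linarith

end

lemma xiF_all_zero_of_not {ι : Type*} (I : Finset ι) (x : ι → ℝ)
    (h : ¬ (I.filter fun j => xiF I x (x j) ≠ 0).Nonempty) :
    ∀ α, xiF I x α = 0 := by
  intro α
  by_contra hne
  obtain ⟨i, hiI, hio⟩ := exists_of_xiF_ne I x α hne
  apply h
  refine ⟨i, Finset.mem_filter.2 ⟨hiI, ?_⟩⟩
  rcases hio with h' | h'
  · rw [h']; exact hne
  · rw [h', xiF_neg]; simpa using hne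

lemma prod_xiF_zero {ι κ : Type*} (I : Finset ι) (K : Finset κ) (x : ι → ℝ) (y : κ → ℝ)
    (hcase : (∀ α, xiF I x α = 0) ∨ (∀ α, xiF K y α = 0)) :
    ∀ γ, xiF (I ×ˢ K) (fun q => x q.1 * y q.2) γ = 0 := by
  intro γ
  by_cases hγ : γ = 0
  · rw [hγ, xiF_zero]
  rw [xiF_prod I K x y γ hγ]
  rcases hcase with hx | hy
  · apply sum_odd_eq_zero _ x (fun β => xiF K y (γ / β))
    · intro β; rw [div_neg, xiF_neg]
    · intro i _
      have := hx (x i)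
      unfold xiF at this
      omega
  · apply Finset.sum_eq_zero
    intro i _
    exact hy _

lemma exists_top {ι : Type*} (I : Finset ι) (x : ι → ℝ)
    (h : (I.filter fun j => xiF I x (x j) ≠ 0).Nonempty) :
    ∃ M, 0 < M ∧ xiF I x M ≠ 0 ∧ ∀ α, M < |α| → xiF I x α = 0 :=
  ⟨_, sup_abs_pos I x h, xiF_sup_ne I x h, xiF_bound I x h⟩

lemma mem_J_of {ι : Type*} {I : Finset ι} {x : ι → ℝ} {M : ℝ} (hne : xiF I x M ≠ 0) :
    ∃ i ∈ (I.filter fun j => xiF I x (x j) ≠ 0), x i = M ∨ x i = -M := by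
  obtain ⟨i, hiI, hio⟩ := exists_of_xiF_ne I x M hne
  refine ⟨i, Finset.mem_filter.2 ⟨hiI, ?_⟩, hio⟩
  rcases hio with h' | h'
  · rw [h']; exact hne
  · rw [h', xiF_neg]; simpa using hne

lemma FF_char {ι : Type*} (I : Finset ι) (x : ι → ℝ) (M : ℝ) (hMpos : 0 < M)
    (hne : xiF I x M ≠ 0) (hbd : ∀ α, M < |α| → xiF I x α = 0) :
    FF I x = if 0 < xiF I x M then M else -M := by
  obtain ⟨i, hiJ, hio⟩ := mem_J_of hne
  have hJ : (I.filter fun j => xiF I x (x j) ≠ 0).Nonempty := ⟨i, hiJ⟩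
  have hS : ((I.filter fun j => xiF I x (x j) ≠ 0).sup' hJ fun i => |x i|) = M := by
    apply le_antisymm
    · apply Finset.sup'_le
      intro k hk
      by_contra hc
      push_neg at hc
      exact (Finset.mem_filter.1 hk).2 (hbd _ hc)
    · have habs : |x i| = M := by
        rcases hio with h' | h' <;> rw [h'] <;>
          simp [abs_of_pos hMpos]
      rw [← habs]
      exact Finset.le_sup' (fun i => |x i|) hiJ
  by_cases hpos : 0 < xiF I x M
  · rw [if_pos hpos, FF_of_pos I x hJ (by rw [hS]; exact hpos)]
    exact hS
  · have hneg : xiF I x M < 0 := lt_of_le_of_ne (not_lt.1 hpos) hne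
    rw [if_neg hpos, FF_of_neg I x hJ (by rw [hS]; exact hneg), hS]

theorem stmt_10 {n m : ℕ} (x : Fin n → ℝ) (y : Fin m → ℝ) :
    (FF Finset.univ x) * (FF Finset.univ y) =
      FF (Finset.univ : Finset (Fin n × Fin m)) (fun q => x q.1 * y q.2) := by
  classical
  rw [← Finset.univ_product_univ]
  set I := (Finset.univ : Finset (Fin n)) with hI
  set K := (Finset.univ : Finset (Fin m)) with hK
  by_cases hx : (I.filter fun j => xiF I x (x j) ≠ 0).Nonempty
  swap
  · rw [FF_of_not _ _ hx, zero_mul]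
    have hall := prod_xiF_zero I K x y (Or.inl (xiF_all_zero_of_not I x hx))
    symm
    apply FF_of_not
    rintro ⟨q, hq⟩
    exact (Finset.mem_filter.1 hq).2 (hall _)
  by_cases hy : (K.filter fun j => xiF K y (y j) ≠ 0).Nonempty
  swap
  · rw [FF_of_not _ _ hy, mul_zero]
    have hall := prod_xiF_zero I K x y (Or.inr (xiF_all_zero_of_not K y hy))
    symm
    apply FF_of_not
    rintro ⟨q, hq⟩
    exact (Finset.mem_filter.1 hq).2 (hall _)
  obtain ⟨Mx, hMxpos, hP, Hx⟩ := exists_top I x hx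
  obtain ⟨My, hMypos, hQ, Hy⟩ := exists_top K y hy
  have hkey : ∀ γ, Mx * My ≤ |γ| →
      xiF (I ×ˢ K) (fun q => x q.1 * y q.2) γ = xiF I x Mx * xiF K y (γ / Mx) :=
    fun γ h => xiF_prod_top I K x y Mx My hMxpos hMypos Hx Hy γ h
  have hPQ : xiF (I ×ˢ K) (fun q => x q.1 * y q.2) (Mx * My) = xiF I x Mx * xiF K y My := by
    rw [hkey _ (le_of_eq (abs_of_pos (mul_pos hMxpos hMypos)).symm),
        mul_div_cancel_left₀ _ (ne_of_gt hMxpos)]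
  have hbdprod : ∀ γ, Mx * My < |γ| → xiF (I ×ˢ K) (fun q => x q.1 * y q.2) γ = 0 := by
    intro γ hγ
    rw [hkey _ hγ.le]
    have h2 : My < |γ / Mx| := by
      rw [abs_div, abs_of_pos hMxpos, lt_div_iff₀ hMxpos]
      nlinarith
    rw [Hy _ h2, mul_zero]
  rw [FF_char I x Mx hMxpos hP Hx, FF_char K y My hMypos hQ Hy,
      FF_char (I ×ˢ K) (fun q => x q.1 * y q.2) (Mx * My) (mul_pos hMxpos hMypos)
        (by rw [hPQ]; exact mul_ne_zero hP hQ) hbdprod,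
      hPQ]
  rcases lt_or_gt_of_ne hP with hPn | hPp <;> rcases lt_or_gt_of_ne hQ with hQn | hQp
  · rw [if_neg (not_lt.2 hPn.le), if_neg (not_lt.2 hQn.le),
        if_pos (mul_pos_of_neg_of_neg hPn hQn)]
    ring
  · rw [if_neg (not_lt.2 hPn.le), if_pos hQp,
        if_neg (not_lt.2 (mul_nonpos_of_nonpos_of_nonneg hPn.le hQp.le))]
    ring
  · rw [if_pos hPp, if_neg (not_lt.2 hQn.le),
        if_neg (not_lt.2 (mul_nonpos_of_nonneg_of_nonpos hPp.le hQn.le))]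
    ring
  · rw [if_pos hPp, if_pos hQp, if_pos (mul_pos hPp hQp)]
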